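/- For every (x*, r) ∈ X* × ℝ the following are equivalent: (i) every x ∈ X satisfying σ_{𝒜_t}(x) ≤ b_t for all t ∈ T also satisfies ⟨x*, x⟩ ≥ r; (ii) (x*, r) ∈ −oco cone[ (⋃_{t∈T} 𝒜_t × {b_t}) ∪ {(0_{X*},1)} ], where cone A := {λa : λ ≥ 0, a ∈ A} and oco denotes the closed convex hull in X* × ℝ (weak*-topology on X* times the usual topology on ℝ). -/

import Mathlib

open Pointwise

/-- Every continuous linear functional on the weak-* dual is evaluation at a point. -/
lemma weakDual_dual_eval
    {X : Type*} [AddCommGroup X] [Module ℝ X] [TopologicalSpace X]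
    (f : WeakDual ℝ X →L[ℝ] ℝ) : ∃ x : X, ∀ p : WeakDual ℝ X, f p = p x := by
  classical
  have : Nonempty X := ⟨0⟩
  set B := topDualPairing ℝ X with hB
  let q : Seminorm ℝ (WeakDual ℝ X) := (normSeminorm ℝ ℝ).comp f.toLinearMap
  have hq : Continuous q := by
    have : Continuous fun p : WeakDual ℝ X => ‖f p‖ := f.continuous.norm
    exact this
  obtain ⟨s, C, hC0, hC⟩ := Seminorm.bound_of_continuous (B.weakBilin_withSeminorms) q hq
  let L : s → (WeakDual ℝ X →ₗ[ℝ] ℝ) := fun i => B.flip (i : X)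
  have hker : ⨅ i, LinearMap.ker (L i) ≤ LinearMap.ker (f.toLinearMap) := by
    intro p hp
    simp only [Submodule.mem_iInf, LinearMap.mem_ker] at hp ⊢
    have hsup : (s.sup (B.toSeminormFamily)) p = 0 := by
      have h1 : (s.sup (B.toSeminormFamily)) p ≤ 0 := by
        apply Seminorm.finset_sup_apply_le le_rfl
        intro i hi
        have h0 : B p i = 0 := hp ⟨i, hi⟩
        change ‖B p i‖ ≤ 0
        rw [h0, norm_zero]
      exact le_antisymm h1 (apply_nonneg _ _)
    have h2 : ‖f p‖ ≤ C • (s.sup B.toSeminormFamily) p := hC p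
    rw [hsup, smul_zero] at h2
    simpa [norm_le_zero_iff] using h2
  have hmem := mem_span_of_iInf_ker_le_ker (L := L) (K := f.toLinearMap) hker
  obtain ⟨c, hc⟩ := (Submodule.mem_span_range_iff_exists_fun ℝ).1 hmem
  refine ⟨∑ i : s, c i • (i : X), fun p => ?_⟩
  have h1 : (∑ i : s, c i • L i) p = f p := by rw [hc]; rfl
  simp only [LinearMap.coe_sum, Finset.sum_apply, LinearMap.smul_apply] at h1
  rw [← h1, map_sum]
  exact Finset.sum_congr rfl fun i _ => by
    rw [map_smul]; rfl

/-- Robust Farkas lemma for systems of sub-affine functions (Corollary 2.2 / `lem_FL3`). -/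
theorem stmt2
    {X : Type*}
    [AddCommGroup X] [Module ℝ X] [TopologicalSpace X] [IsTopologicalAddGroup X]
    [ContinuousSMul ℝ X] [LocallyConvexSpace ℝ X] [T2Space X]
    {T : Type*} [Nonempty T]
    (A : T → Set (WeakDual ℝ X)) (hA_ne : ∀ t, (A t).Nonempty)
    (hA_closed : ∀ t, IsClosed (A t)) (hA_conv : ∀ t, Convex ℝ (A t))
    (b : T → ℝ)
    (hF : {x : X | ∀ t, ∀ p ∈ A t, p x ≤ b t}.Nonempty)
    (xs : WeakDual ℝ X) (r : ℝ) :
    (∀ x : X, (∀ t, ∀ p ∈ A t, p x ≤ b t) → r ≤ xs x) ↔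
      (xs, r) ∈ -closure (convexHull ℝ
        {q : WeakDual ℝ X × ℝ | ∃ l : ℝ, 0 ≤ l ∧
          ∃ a ∈ (⋃ t, (A t) ×ˢ ({b t} : Set ℝ)) ∪ {((0 : WeakDual ℝ X), (1 : ℝ))},
            q = l • a}) := by
  classical
  set K : Set (WeakDual ℝ X × ℝ) :=
    {q : WeakDual ℝ X × ℝ | ∃ l : ℝ, 0 ≤ l ∧
      ∃ a ∈ (⋃ t, (A t) ×ˢ ({b t} : Set ℝ)) ∪ {((0 : WeakDual ℝ X), (1 : ℝ))},
        q = l • a} with hKdef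
  have hzeroK : (0 : WeakDual ℝ X × ℝ) ∈ K :=
    ⟨0, le_rfl, ((0 : WeakDual ℝ X), (1 : ℝ)), Or.inr rfl, by simp⟩
  have hscale : ∀ (l : ℝ), 0 ≤ l → ∀ q ∈ K, l • q ∈ K := by
    rintro l hl q ⟨l', hl', a, ha, rfl⟩
    exact ⟨l * l', mul_nonneg hl hl', a, ha, smul_smul l l' a⟩
  haveI hlc : LocallyConvexSpace ℝ (WeakDual ℝ X) := WeakBilin.locallyConvexSpace
  constructor
  · -- hard direction
    intro h
    by_contra hn
    rw [Set.mem_neg] at hn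
    obtain ⟨f, u, hfu, hux⟩ := geometric_hahn_banach_closed_point
      ((convex_convexHull ℝ K).closure) isClosed_closure hn
    have hu0 : (0:ℝ) < u := by
      have := hfu 0 (subset_closure (subset_convexHull ℝ K hzeroK))
      simpa using this
    have hfK : ∀ q ∈ K, f q ≤ 0 := by
      intro q hq
      by_contra hpos
      push_neg at hpos
      have hl : (0:ℝ) ≤ (u+1)/(f q) := le_of_lt (by positivity)
      have hmem' := hfu (((u+1)/(f q)) • q)
        (subset_closure (subset_convexHull ℝ K (hscale _ hl q hq)))
      rw [map_smul, smul_eq_mul, div_mul_cancel₀ _ (ne_of_gt hpos)] at hmem'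
      linarith
    have hfC : ∀ q ∈ closure (convexHull ℝ K), f q ≤ 0 := by
      intro q hq
      have hsub : closure (convexHull ℝ K) ⊆ {q : WeakDual ℝ X × ℝ | f q ≤ 0} := by
        apply closure_minimal
        · exact convexHull_min hfK (convex_halfSpace_le ⟨map_add f, map_smul f⟩ 0)
        · exact isClosed_le f.continuous continuous_const
      exact hsub hq
    obtain ⟨x₀, hx₀⟩ := weakDual_dual_eval (f.comp (ContinuousLinearMap.inl ℝ (WeakDual ℝ X) ℝ))
    set c : ℝ := f ((0 : WeakDual ℝ X), (1 : ℝ)) with hcdef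
    have hsplit : ∀ (p : WeakDual ℝ X) (s : ℝ), f (p, s) = p x₀ + s * c := by
      intro p s
      have h1 : ((p, s) : WeakDual ℝ X × ℝ)
          = (p, 0) + s • ((0 : WeakDual ℝ X), (1 : ℝ)) := by
        simp [Prod.ext_iff]
      rw [h1, map_add, map_smul, smul_eq_mul]
      have h2 : f (p, (0:ℝ)) = p x₀ := hx₀ p
      rw [h2, hcdef]
    have hcle : c ≤ 0 := by
      have := hfK ((0 : WeakDual ℝ X), (1 : ℝ))
        ⟨1, zero_le_one, _, Or.inr rfl, (one_smul ℝ _).symm⟩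
      simpa [hcdef] using this
    have hAt : ∀ t, ∀ p ∈ A t, p x₀ + b t * c ≤ 0 := by
      intro t p hp
      have hmemK : ((p, b t) : WeakDual ℝ X × ℝ) ∈ K :=
        ⟨1, zero_le_one, (p, b t),
          Or.inl (Set.mem_iUnion.2 ⟨t, ⟨hp, rfl⟩⟩), (one_smul ℝ _).symm⟩
      have := hfK _ hmemK
      rwa [hsplit p (b t)] at this
    have hxsr : 0 < -(xs x₀) - r * c := by
      have hne : -((xs, r) : WeakDual ℝ X × ℝ) = ((-xs, -r) : WeakDual ℝ X × ℝ) := rfl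
      rw [hne, hsplit (-xs) (-r)] at hux
      have hneg : (-xs) x₀ = -(xs x₀) := rfl
      rw [hneg] at hux
      nlinarith
    by_cases hc0 : c = 0
    · obtain ⟨xbar, hxbar⟩ := hF
      have hxs0 : xs x₀ < 0 := by rw [hc0] at hxsr; simpa using hxsr
      set s0 : ℝ := max 0 ((r - 1 - xs xbar)/(xs x₀)) with hs0def
      have hs0 : 0 ≤ s0 := le_max_left _ _
      have hfeas : ∀ t, ∀ p ∈ A t, p (xbar + s0 • x₀) ≤ b t := by
        intro t p hp
        rw [map_add, map_smul, smul_eq_mul]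
        have h1 : p x₀ ≤ 0 := by have := hAt t p hp; rw [hc0] at this; linarith
        have h2 : s0 * p x₀ ≤ 0 := mul_nonpos_of_nonneg_of_nonpos hs0 h1
        have h3 := hxbar t p hp
        linarith
      have h2 := h _ hfeas
      rw [map_add, map_smul, smul_eq_mul] at h2
      have hle : (r - 1 - xs xbar)/(xs x₀) ≤ s0 := le_max_right _ _
      have h3 : s0 * xs x₀ ≤ r - 1 - xs xbar := by
        calc s0 * xs x₀ ≤ ((r - 1 - xs xbar)/(xs x₀)) * xs x₀ := by nlinarith
          _ = r - 1 - xs xbar := div_mul_cancel₀ _ (ne_of_lt hxs0)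
      linarith
    · have hcneg : c < 0 := lt_of_le_of_ne hcle hc0
      have hcpos : (0:ℝ) < -c := by linarith
      have hfeas : ∀ t, ∀ p ∈ A t, p ((-c)⁻¹ • x₀) ≤ b t := by
        intro t p hp
        rw [map_smul, smul_eq_mul]
        rw [inv_mul_le_iff₀ hcpos]
        have := hAt t p hp
        nlinarith
      have h2 := h _ hfeas
      rw [map_smul, smul_eq_mul] at h2
      have h3 : (-c)⁻¹ * xs x₀ < r := by
        rw [inv_mul_lt_iff₀ hcpos]
        nlinarith
      linarith
  · -- easy direction
    intro hmem x hx
    rw [Set.mem_neg] at hmem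
    have hsub : closure (convexHull ℝ K) ⊆ {q : WeakDual ℝ X × ℝ | q.1 x ≤ q.2} := by
      apply closure_minimal
      · apply convexHull_min
        · rintro q ⟨l, hl, a, ha, rfl⟩
          rcases ha with ha | ha
          · rcases Set.mem_iUnion.1 ha with ⟨t, hp, hb⟩
            simp only [Set.mem_singleton_iff] at hb
            have hval : (l • a).1 x = l * a.1 x := rfl
            have hval2 : (l • a).2 = l * a.2 := rfl
            simp only [Set.mem_setOf_eq, hval, hval2]
            have := hx t a.1 hp
            rw [hb]
            nlinarith [hx t a.1 hp]
          · rw [Set.mem_singleton_iff] at ha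
            subst ha
            have hval : (l • ((0 : WeakDual ℝ X), (1:ℝ))).1 x = 0 := by
              have h0 : (l • ((0 : WeakDual ℝ X), (1:ℝ))).1 = (0 : WeakDual ℝ X) := by simp
              rw [h0]; rfl
            have hval2 : (l • ((0 : WeakDual ℝ X), (1:ℝ))).2 = l := by
              simp [Prod.smul_snd]
            simp only [Set.mem_setOf_eq, hval, hval2]
            exact hl
        · intro q1 h1 q2 h2 aa bb ha hb hab
          simp only [Set.mem_setOf_eq] at h1 h2 ⊢
          have hv1 : (aa • q1 + bb • q2).1 x = aa * q1.1 x + bb * q2.1 x := rfl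
          have hv2 : (aa • q1 + bb • q2).2 = aa * q1.2 + bb * q2.2 := rfl
          rw [hv1, hv2]
          nlinarith
      · exact isClosed_le (((WeakDual.eval_continuous x).comp continuous_fst)) continuous_snd
    have := hsub hmem
    simp only [Set.mem_setOf_eq] at this
    have hneg : ((-(xs, r) : WeakDual ℝ X × ℝ)).1 x = -(xs x) := rfl
    have hneg2 : ((-(xs, r) : WeakDual ℝ X × ℝ)).2 = -r := rfl
    rw [hneg, hneg2] at this
    linarith
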